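/- Let P ⊆ ℝ² be finite and let d, n ∈ ℝ² be orthonormal vectors. Let a ∈ ℝ² and let u₁, u₂ be unit vectors with ⟨u₁, u₂⟩ ≤ 0 such that the interior of the wedge W(a; u₁, u₂) contains no point of P, and such that there exist vectors w₁ = s₁u₁ + t₁u₂ and w₂ = s₂u₁ + t₂u₂ with s₁, t₁, s₂, t₂ ≥ 0 satisfying ⟨w₁, n⟩ < 0, ⟨w₂, n⟩ < 0 and ⟨w₁, d⟩ < 0 < ⟨w₂, d⟩. Let b ∈ ℝ² and let v₁, v₂ be unit vectors with ⟨v₁, v₂⟩ = 0, ⟨v₁, n⟩ < 0, ⟨v₂, n⟩ < 0 and ⟨v₁, d⟩ < 0 < ⟨v₂, d⟩, and suppose there exist r₁, r₂ > 0 with b + r₁·v₁ ∈ P and b + r₂·v₂ ∈ P. Then b does not lie in the interior of W(a; u₁, u₂). (This is the corollary that no point b ≠ a of the subchain A_i(P), being the apex of a P-free quadrant supported by points of P whose rays cross the edge e_i on opposite sides of the perpendicular through b, can belong to the P-free wedge w_a of another point a of the subchain.) -/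

import Mathlib

open scoped RealInnerProductSpace

noncomputable section

/-- The Euclidean plane. -/
abbrev Plane := EuclideanSpace ℝ (Fin 2)

/-- The closed wedge with apex `a` spanned by the directions `u₁` and `u₂`. -/
def wedge (a u₁ u₂ : Plane) : Set Plane :=
  {z | ∃ s t : ℝ, 0 ≤ s ∧ 0 ≤ t ∧ z = a + s • u₁ + t • u₂}

lemma parseval (d n : Plane) (hd : ‖d‖ = 1) (hn : ‖n‖ = 1) (hdn : ⟪d, n⟫ = 0) :
    ∀ x y : Plane, ⟪x, y⟫ = ⟪x, d⟫ * ⟪y, d⟫ + ⟪x, n⟫ * ⟪y, n⟫ := by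
  have hdd : ⟪d, d⟫ = 1 := by rw [real_inner_self_eq_norm_mul_norm, hd]; norm_num
  have hnn : ⟪n, n⟫ = 1 := by rw [real_inner_self_eq_norm_mul_norm, hn]; norm_num
  have horth : Orthonormal ℝ ![d, n] := by
    rw [orthonormal_iff_ite]
    intro i j
    fin_cases i <;> fin_cases j <;>
      simp only [Matrix.cons_val_zero, Matrix.cons_val_one, Matrix.head_cons] <;>
      first
        | exact hdd | exact hnn | simpa using hdn | simpa [real_inner_comm d n] using hdn
  have card : Fintype.card (Fin 2) = Module.finrank ℝ Plane := by
    simp [finrank_euclideanSpace_fin]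
  have horth' : Orthonormal ℝ (⇑(basisOfOrthonormalOfCardEqFinrank horth card)) := by
    rwa [coe_basisOfOrthonormalOfCardEqFinrank]
  let B := (basisOfOrthonormalOfCardEqFinrank horth card).toOrthonormalBasis horth'
  have hB : ⇑B = ![d, n] := by
    show ⇑((basisOfOrthonormalOfCardEqFinrank horth card).toOrthonormalBasis horth') = _
    rw [Module.Basis.coe_toOrthonormalBasis, coe_basisOfOrthonormalOfCardEqFinrank]
  intro x y
  have h := B.sum_inner_mul_inner x y
  rw [Fin.sum_univ_two] at h
  rw [hB] at h
  simp only [Matrix.cons_val_zero, Matrix.cons_val_one, Matrix.head_cons] at h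
  rw [← h, real_inner_comm d y, real_inner_comm n y]

lemma key_signs (a1 a2 b1 b2 c1 c2 e1 e2 p q s1 t1 s2 t2 : ℝ)
    (hA : 0 < a1 * b2 - a2 * b1)
    (hu : a1 * b1 + a2 * b2 ≤ 0)
    (hs1 : 0 ≤ s1) (ht1 : 0 ≤ t1)
    (hc1 : c1 = s1 * a1 + t1 * b1) (hc2 : c2 = s1 * a2 + t1 * b2)
    (hc1n : c1 < 0) (hc2n : c2 < 0)
    (hs2 : 0 ≤ s2) (ht2 : 0 ≤ t2)
    (he1 : e1 = s2 * a1 + t2 * b1) (he2 : e2 = s2 * a2 + t2 * b2)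
    (he1p : 0 < e1) (he2n : e2 < 0)
    (hp : p < 0) (hq : q < 0) :
    (0 ≤ a1 * q - a2 * p ∧ 0 ≤ p * b2 - q * b1) ∨
    (0 ≤ a1 * p + a2 * q ∧ 0 ≤ -q * b2 - p * b1) := by
  have F1 : 0 ≤ a1 * c2 - a2 * c1 := by
    have h : a1 * c2 - a2 * c1 = t1 * (a1 * b2 - a2 * b1) := by rw [hc1, hc2]; ring
    rw [h]; positivity
  have F2 : 0 ≤ c1 * b2 - c2 * b1 := by
    have h : c1 * b2 - c2 * b1 = s1 * (a1 * b2 - a2 * b1) := by rw [hc1, hc2]; ring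
    rw [h]; positivity
  have F3 : 0 ≤ a1 * e2 - a2 * e1 := by
    have h : a1 * e2 - a2 * e1 = t2 * (a1 * b2 - a2 * b1) := by rw [he1, he2]; ring
    rw [h]; positivity
  have F4 : 0 ≤ e1 * b2 - e2 * b1 := by
    have h : e1 * b2 - e2 * b1 = s2 * (a1 * b2 - a2 * b1) := by rw [he1, he2]; ring
    rw [h]; positivity
  have F5 : 0 < c1 * p + c2 * q := by
    have h1 : 0 < -c1 * -p := mul_pos (by linarith) (by linarith)
    have h2 : 0 < -c2 * -q := mul_pos (by linarith) (by linarith)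
    linarith only [h1, h2]
  have F6 : 0 < p * e2 - q * e1 := by
    have h1 : 0 < -p * -e2 := mul_pos (by linarith) (by linarith)
    have h2 : 0 < -q * e1 := mul_pos (by linarith) he1p
    linarith only [h1, h2]
  -- M1 (i.e. D(u₁,v₂') < 0) implies a2 > 0
  have HM1 : a1 * p + a2 * q < 0 → 0 < a2 := by
    intro M1
    have key : a2 * (c1 * p + c2 * q)
        = (a1 * c2 - a2 * c1) * (-p) + (-(a1 * p + a2 * q)) * (-c2) := by ring
    have h1 : 0 ≤ (a1 * c2 - a2 * c1) * (-p) := mul_nonneg F1 (by linarith)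
    have h2 : 0 < (-(a1 * p + a2 * q)) * (-c2) := mul_pos (by linarith) (by linarith)
    have h3 : 0 < a2 * (c1 * p + c2 * q) := by linarith only [key, h1, h2]
    by_contra hcon
    push_neg at hcon
    have h4 : 0 ≤ -a2 * (c1 * p + c2 * q) := mul_nonneg (by linarith) F5.le
    linarith only [h3, h4]
  -- N2 (i.e. D(v₁,u₂) < 0) implies b2 > 0
  have HN2 : p * b2 - q * b1 < 0 → 0 < b2 := by
    intro N2
    have key : b2 * (p * e2 - q * e1)
        = (e1 * b2 - e2 * b1) * (-q) + (q * b1 - p * b2) * (-e2) := by ring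
    have h1 : 0 ≤ (e1 * b2 - e2 * b1) * (-q) := mul_nonneg F4 (by linarith)
    have h2 : 0 < (q * b1 - p * b2) * (-e2) := mul_pos (by linarith) (by linarith)
    have h3 : 0 < b2 * (p * e2 - q * e1) := by linarith only [key, h1, h2]
    by_contra hcon
    push_neg at hcon
    have h4 : 0 ≤ -b2 * (p * e2 - q * e1) := mul_nonneg (by linarith) F6.le
    linarith only [h3, h4]
  rcases le_or_gt 0 (a1 * q - a2 * p) with hα | N1
  · rcases le_or_gt 0 (p * b2 - q * b1) with hβ | N2
    · exact Or.inl ⟨hα, hβ⟩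
    · have b2pos := HN2 N2
      rcases le_or_gt 0 (a1 * p + a2 * q) with hγ | M1
      · rcases le_or_gt 0 (-q * b2 - p * b1) with hδ | M2
        · exact Or.inr ⟨hγ, hδ⟩
        · -- case N2 ∧ M2
          exfalso
          have b1neg : b1 < 0 := by
            have h0 : 0 < -q * b2 := mul_pos (by linarith) b2pos
            have h1 : 0 < p * b1 := by linarith only [M2, h0]
            by_contra hb
            push_neg at hb
            have h2 : 0 ≤ -p * b1 := mul_nonneg (by linarith) hb
            linarith only [h1, h2]
          have h1 : 0 < -c1 * b2 := mul_pos (by linarith) b2pos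
          have h2 : 0 < -c2 * -b1 := mul_pos (by linarith) (by linarith)
          linarith only [F2, h1, h2]
      · -- case N2 ∧ M1
        exfalso
        have a2pos := HM1 M1
        have h1 : 0 ≤ s1 * a2 := mul_nonneg hs1 a2pos.le
        have h2 : 0 ≤ t1 * b2 := mul_nonneg ht1 b2pos.le
        linarith only [hc2n, hc2, h1, h2]
  · rcases le_or_gt 0 (a1 * p + a2 * q) with hγ | M1
    · rcases le_or_gt 0 (-q * b2 - p * b1) with hδ | M2
      · exact Or.inr ⟨hγ, hδ⟩
      · -- case N1 ∧ M2
        exfalso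
        have idn : a2 * (p * c2 - q * c1)
            = (-(a1 * q - a2 * p)) * c2 + (a1 * c2 - a2 * c1) * q := by ring
        have idd : a1 * (p * c2 - q * c1)
            = (-(a1 * q - a2 * p)) * c1 + (a1 * c2 - a2 * c1) * p := by ring
        have h1 : (-(a1 * q - a2 * p)) * c2 < 0 := mul_neg_of_pos_of_neg (by linarith) hc2n
        have h2 : (a1 * c2 - a2 * c1) * q ≤ 0 := mul_nonpos_of_nonneg_of_nonpos F1 hq.le
        have h3 : (-(a1 * q - a2 * p)) * c1 < 0 := mul_neg_of_pos_of_neg (by linarith) hc1n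
        have h4 : (a1 * c2 - a2 * c1) * p ≤ 0 := mul_nonpos_of_nonneg_of_nonpos F1 hp.le
        have ha2X : a2 * (p * c2 - q * c1) < 0 := by linarith only [idn, h1, h2]
        have ha1X : a1 * (p * c2 - q * c1) < 0 := by linarith only [idd, h3, h4]
        rcases le_or_gt 0 (p * c2 - q * c1) with hw | hw
        · -- far subcase: u₁ lies in the third quadrant
          have a2neg : a2 < 0 := by
            by_contra hcon
            push_neg at hcon
            have h5 : 0 ≤ a2 * (p * c2 - q * c1) := mul_nonneg hcon hw
            linarith only [h5, ha2X]
          have a1neg : a1 < 0 := by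
            by_contra hcon
            push_neg at hcon
            have h5 : 0 ≤ a1 * (p * c2 - q * c1) := mul_nonneg hcon hw
            linarith only [h5, ha1X]
          have hb1 : 0 < b1 * (a1 ^ 2 + a2 ^ 2) := by
            have h5 : 0 < -a2 * (a1 * b2 - a2 * b1) := mul_pos (by linarith) hA
            have h6 : 0 ≤ -a1 * (-(a1 * b1 + a2 * b2)) :=
              mul_nonneg (by linarith) (by linarith)
            linarith only [h5, h6]
          have b1pos : 0 < b1 := by
            by_contra hcon
            push_neg at hcon
            have h5 : b1 * (a1 ^ 2 + a2 ^ 2) ≤ 0 :=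
              mul_nonpos_iff.mpr (Or.inr ⟨hcon, by positivity⟩)
            linarith only [h5, hb1]
          have b2neg : b2 < 0 := by
            have h5 : 0 < -p * b1 := mul_pos (by linarith) b1pos
            by_contra hcon
            push_neg at hcon
            have h6 : 0 ≤ -q * b2 := mul_nonneg (by linarith) hcon
            linarith only [M2, h5, h6]
          have keyprod : (a1 * q) * (-p * b1) < (a2 * p) * (q * b2) := by
            have hge1 : 0 ≤ a1 * q := by
              have := mul_pos (show (0:ℝ) < -a1 by linarith) (show (0:ℝ) < -q by linarith)
              linarith only [this]
            have hge2 : 0 ≤ -p * b1 := (mul_pos (show (0:ℝ) < -p by linarith) b1pos).le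
            exact mul_lt_mul'' (by linarith only [N1]) (by linarith only [M2]) hge1 hge2
          have hpq : 0 ≤ p * q * (-(a1 * b1 + a2 * b2)) :=
            mul_nonneg (mul_pos_of_neg_of_neg hp hq).le (by linarith)
          linarith only [keyprod, hpq]
        · -- near subcase: u₁ lies in the first quadrant
          have a2pos : 0 < a2 := by
            by_contra hcon
            push_neg at hcon
            have h5 : 0 ≤ -a2 * -(p * c2 - q * c1) := mul_nonneg (by linarith) (by linarith)
            linarith only [h5, ha2X]
          have a1pos : 0 < a1 := by
            by_contra hcon
            push_neg at hcon
            have h5 : 0 ≤ -a1 * -(p * c2 - q * c1) := mul_nonneg (by linarith) (by linarith)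
            linarith only [h5, ha1X]
          have h5 : 0 < a1 * -e2 := mul_pos a1pos (by linarith)
          have h6 : 0 < a2 * e1 := mul_pos a2pos he1p
          linarith only [F3, h5, h6]
    · -- case N1 ∧ M1
      exfalso
      have a2pos := HM1 M1
      have a1pos : 0 < a1 := by
        have h5 : 0 < a2 * -p := mul_pos a2pos (by linarith)
        by_contra hcon
        push_neg at hcon
        have h6 : 0 ≤ -a1 * -q := mul_nonneg (by linarith) (by linarith)
        linarith only [N1, h5, h6]
      have h5 : 0 < a1 * -e2 := mul_pos a1pos (by linarith)
      have h6 : 0 < a2 * e1 := mul_pos a2pos he1p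
      linarith only [F3, h5, h6]


lemma exists_shift {W : Set Plane} {b : Plane} (g : Plane) (hb : b ∈ interior W) :
    ∃ δ : ℝ, 0 < δ ∧ b - δ • g ∈ W ∧ b + δ • g ∈ W := by
  rw [mem_interior_iff_mem_nhds, Metric.mem_nhds_iff] at hb
  obtain ⟨ε, hε, hball⟩ := hb
  have hg : (0:ℝ) < ‖g‖ + 1 := by positivity
  set δ := ε / 2 / (‖g‖ + 1) with hδdef
  have hδ : 0 < δ := by positivity
  have hnorm : ‖δ • g‖ < ε := by
    rw [norm_smul, Real.norm_eq_abs, abs_of_pos hδ]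
    have h1 : δ * ‖g‖ ≤ δ * (‖g‖ + 1) := by nlinarith [hδ.le]
    have h2 : δ * (‖g‖ + 1) = ε / 2 := by rw [hδdef, div_mul_cancel₀ _ hg.ne']
    linarith
  refine ⟨δ, hδ, hball ?_, hball ?_⟩ <;> rw [Metric.mem_ball, dist_eq_norm]
  · simpa using hnorm
  · simpa using hnorm

lemma cramer (d n : Plane)
    (par : ∀ x y : Plane, ⟪x, y⟫ = ⟪x, d⟫ * ⟪y, d⟫ + ⟪x, n⟫ * ⟪y, n⟫)
    (x y z : Plane) :
    (⟪x, d⟫ * ⟪y, n⟫ - ⟪x, n⟫ * ⟪y, d⟫) • z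
      = (⟪z, d⟫ * ⟪y, n⟫ - ⟪z, n⟫ * ⟪y, d⟫) • x
        + (⟪x, d⟫ * ⟪z, n⟫ - ⟪x, n⟫ * ⟪z, d⟫) • y := by
  set V := (⟪x, d⟫ * ⟪y, n⟫ - ⟪x, n⟫ * ⟪y, d⟫) • z
    - ((⟪z, d⟫ * ⟪y, n⟫ - ⟪z, n⟫ * ⟪y, d⟫) • x
        + (⟪x, d⟫ * ⟪z, n⟫ - ⟪x, n⟫ * ⟪z, d⟫) • y) with hV
  have hVd : ⟪V, d⟫ = 0 := by
    simp only [hV, inner_sub_left, inner_add_left, real_inner_smul_left]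
    ring
  have hVn : ⟪V, n⟫ = 0 := by
    simp only [hV, inner_sub_left, inner_add_left, real_inner_smul_left]
    ring
  have hVV : ⟪V, V⟫ = 0 := by rw [par V V, hVd, hVn]; ring
  have hV0 : V = 0 := by rwa [inner_self_eq_zero] at hVV
  exact sub_eq_zero.mp hV0

lemma aux (d n : Plane) (hd : ‖d‖ = 1) (hn : ‖n‖ = 1) (hdn : ⟪d, n⟫ = 0)
    (par : ∀ x y : Plane, ⟪x, y⟫ = ⟪x, d⟫ * ⟪y, d⟫ + ⟪x, n⟫ * ⟪y, n⟫)
    (P : Set Plane)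
    (a u₁ u₂ : Plane) (hu₁ : ‖u₁‖ = 1) (hu₂ : ‖u₂‖ = 1) (hu₁u₂ : ⟪u₁, u₂⟫ ≤ 0)
    (hA : 0 < ⟪u₁, d⟫ * ⟪u₂, n⟫ - ⟪u₁, n⟫ * ⟪u₂, d⟫)
    (hfree : interior (wedge a u₁ u₂) ∩ P = ∅)
    (w₁ w₂ : Plane)
    (hw₁ : ∃ s₁ t₁ : ℝ, 0 ≤ s₁ ∧ 0 ≤ t₁ ∧ w₁ = s₁ • u₁ + t₁ • u₂)
    (hw₂ : ∃ s₂ t₂ : ℝ, 0 ≤ s₂ ∧ 0 ≤ t₂ ∧ w₂ = s₂ • u₁ + t₂ • u₂)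
    (hw₁n : ⟪w₁, n⟫ < 0) (hw₂n : ⟪w₂, n⟫ < 0)
    (hw₁d : ⟪w₁, d⟫ < 0) (hw₂d : 0 < ⟪w₂, d⟫)
    (b v₁ v₂ : Plane) (hv₁v₂ : ⟪v₁, v₂⟫ = 0)
    (hv₁n : ⟪v₁, n⟫ < 0) (hv₂n : ⟪v₂, n⟫ < 0)
    (hv₁d : ⟪v₁, d⟫ < 0) (hv₂d : 0 < ⟪v₂, d⟫)
    (hr₁ : ∃ r₁ > 0, b + r₁ • v₁ ∈ P) (hr₂ : ∃ r₂ > 0, b + r₂ • v₂ ∈ P)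
    (hb : b ∈ interior (wedge a u₁ u₂)) : False := by
  have hdd : ⟪d, d⟫ = 1 := by rw [real_inner_self_eq_norm_mul_norm, hd]; norm_num
  have hnn : ⟪n, n⟫ = 1 := by rw [real_inner_self_eq_norm_mul_norm, hn]; norm_num
  have hnd : ⟪n, d⟫ = 0 := by rw [real_inner_comm]; exact hdn
  have hU1 : ⟪u₁, d⟫ * ⟪u₁, d⟫ + ⟪u₁, n⟫ * ⟪u₁, n⟫ = 1 := by
    rw [← par u₁ u₁, real_inner_self_eq_norm_mul_norm, hu₁]; norm_num
  have hU2 : ⟪u₂, d⟫ * ⟪u₂, d⟫ + ⟪u₂, n⟫ * ⟪u₂, n⟫ = 1 := by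
    rw [← par u₂ u₂, real_inner_self_eq_norm_mul_norm, hu₂]; norm_num
  -- the determinant values of points of the wedge
  have memD : ∀ z ∈ wedge a u₁ u₂,
      0 ≤ ⟪u₁, d⟫ * ⟪z - a, n⟫ - ⟪u₁, n⟫ * ⟪z - a, d⟫ ∧
      0 ≤ ⟪z - a, d⟫ * ⟪u₂, n⟫ - ⟪z - a, n⟫ * ⟪u₂, d⟫ := by
    rintro z ⟨s, t, hs, ht, rfl⟩
    have hza : a + s • u₁ + t • u₂ - a = s • u₁ + t • u₂ := by
      rw [add_assoc, add_sub_cancel_left]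
    rw [hza]
    have h1 : ⟪s • u₁ + t • u₂, d⟫ = s * ⟪u₁, d⟫ + t * ⟪u₂, d⟫ := by
      simp only [inner_add_left, real_inner_smul_left]
    have h2 : ⟪s • u₁ + t • u₂, n⟫ = s * ⟪u₁, n⟫ + t * ⟪u₂, n⟫ := by
      simp only [inner_add_left, real_inner_smul_left]
    rw [h1, h2]
    constructor
    · have h3 : ⟪u₁, d⟫ * (s * ⟪u₁, n⟫ + t * ⟪u₂, n⟫) - ⟪u₁, n⟫ * (s * ⟪u₁, d⟫ + t * ⟪u₂, d⟫)
          = t * (⟪u₁, d⟫ * ⟪u₂, n⟫ - ⟪u₁, n⟫ * ⟪u₂, d⟫) := by ring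
      rw [h3]; positivity
    · have h3 : (s * ⟪u₁, d⟫ + t * ⟪u₂, d⟫) * ⟪u₂, n⟫ - (s * ⟪u₁, n⟫ + t * ⟪u₂, n⟫) * ⟪u₂, d⟫
          = s * (⟪u₁, d⟫ * ⟪u₂, n⟫ - ⟪u₁, n⟫ * ⟪u₂, d⟫) := by ring
      rw [h3]; positivity
  -- strict inequalities at the interior point b
  have hB₁ : 0 < ⟪u₁, d⟫ * ⟪b - a, n⟫ - ⟪u₁, n⟫ * ⟪b - a, d⟫ := by
    obtain ⟨δ, hδ, hmem, -⟩ := exists_shift (⟪u₁, d⟫ • n - ⟪u₁, n⟫ • d) hb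
    have h := (memD _ hmem).1
    have hza : b - δ • (⟪u₁, d⟫ • n - ⟪u₁, n⟫ • d) - a
        = (b - a) - δ • (⟪u₁, d⟫ • n - ⟪u₁, n⟫ • d) := by abel
    rw [hza] at h
    have h1 : ⟪(b - a) - δ • (⟪u₁, d⟫ • n - ⟪u₁, n⟫ • d), d⟫
        = ⟪b - a, d⟫ + δ * ⟪u₁, n⟫ := by
      simp only [inner_sub_left, real_inner_smul_left, hdd, hnd, hnn, hdn]; ring
    have h2 : ⟪(b - a) - δ • (⟪u₁, d⟫ • n - ⟪u₁, n⟫ • d), n⟫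
        = ⟪b - a, n⟫ - δ * ⟪u₁, d⟫ := by
      simp only [inner_sub_left, real_inner_smul_left, hdd, hnd, hnn, hdn]; ring
    rw [h1, h2] at h
    have hδ1 : δ * (⟪u₁, d⟫ * ⟪u₁, d⟫ + ⟪u₁, n⟫ * ⟪u₁, n⟫) = δ := by rw [hU1, mul_one]
    linarith only [h, hδ, hδ1]
  have hB₂ : 0 < ⟪b - a, d⟫ * ⟪u₂, n⟫ - ⟪b - a, n⟫ * ⟪u₂, d⟫ := by
    obtain ⟨δ, hδ, hmem, -⟩ := exists_shift (⟪u₂, n⟫ • d - ⟪u₂, d⟫ • n) hb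
    have h := (memD _ hmem).2
    have hza : b - δ • (⟪u₂, n⟫ • d - ⟪u₂, d⟫ • n) - a
        = (b - a) - δ • (⟪u₂, n⟫ • d - ⟪u₂, d⟫ • n) := by abel
    rw [hza] at h
    have h1 : ⟪(b - a) - δ • (⟪u₂, n⟫ • d - ⟪u₂, d⟫ • n), d⟫
        = ⟪b - a, d⟫ - δ * ⟪u₂, n⟫ := by
      simp only [inner_sub_left, real_inner_smul_left, hdd, hnd, hnn, hdn]; ring
    have h2 : ⟪(b - a) - δ • (⟪u₂, n⟫ • d - ⟪u₂, d⟫ • n), n⟫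
        = ⟪b - a, n⟫ + δ * ⟪u₂, d⟫ := by
      simp only [inner_sub_left, real_inner_smul_left, hdd, hnd, hnn, hdn]; ring
    rw [h1, h2] at h
    have hδ1 : δ * (⟪u₂, d⟫ * ⟪u₂, d⟫ + ⟪u₂, n⟫ * ⟪u₂, n⟫) = δ := by rw [hU2, mul_one]
    linarith only [h, hδ, hδ1]
  -- a nonnegative direction gives a point of P inside the wedge: contradiction
  have final : ∀ v : Plane, ∀ r : ℝ, 0 < r → b + r • v ∈ P →
      0 ≤ ⟪u₁, d⟫ * ⟪v, n⟫ - ⟪u₁, n⟫ * ⟪v, d⟫ →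
      0 ≤ ⟪v, d⟫ * ⟪u₂, n⟫ - ⟪v, n⟫ * ⟪u₂, d⟫ → False := by
    intro v r hr hvP hD1 hD2
    set A := ⟪u₁, d⟫ * ⟪u₂, n⟫ - ⟪u₁, n⟫ * ⟪u₂, d⟫ with hAdef
    -- the open set U
    have cd : Continuous fun y : Plane => ⟪y - a, d⟫ :=
      Continuous.inner (continuous_id.sub continuous_const) continuous_const
    have cn : Continuous fun y : Plane => ⟪y - a, n⟫ :=
      Continuous.inner (continuous_id.sub continuous_const) continuous_const
    have cont1 : Continuous fun y : Plane => ⟪u₁, d⟫ * ⟪y - a, n⟫ - ⟪u₁, n⟫ * ⟪y - a, d⟫ :=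
      (continuous_const.mul cn).sub (continuous_const.mul cd)
    have cont2 : Continuous fun y : Plane => ⟪y - a, d⟫ * ⟪u₂, n⟫ - ⟪y - a, n⟫ * ⟪u₂, d⟫ :=
      (cd.mul continuous_const).sub (cn.mul continuous_const)
    have hUopen : IsOpen {y : Plane |
        0 < ⟪u₁, d⟫ * ⟪y - a, n⟫ - ⟪u₁, n⟫ * ⟪y - a, d⟫ ∧
        0 < ⟪y - a, d⟫ * ⟪u₂, n⟫ - ⟪y - a, n⟫ * ⟪u₂, d⟫} := by
      exact IsOpen.inter (isOpen_lt continuous_const cont1) (isOpen_lt continuous_const cont2)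
    have hUsub : {y : Plane |
        0 < ⟪u₁, d⟫ * ⟪y - a, n⟫ - ⟪u₁, n⟫ * ⟪y - a, d⟫ ∧
        0 < ⟪y - a, d⟫ * ⟪u₂, n⟫ - ⟪y - a, n⟫ * ⟪u₂, d⟫} ⊆ wedge a u₁ u₂ := by
      rintro y ⟨hy1, hy2⟩
      have hAne : A ≠ 0 := ne_of_gt hA
      have hc := cramer d n par u₁ u₂ (y - a)
      rw [← hAdef] at hc
      have h7 := congrArg (fun w : Plane => (1 / A) • w) hc
      simp only [smul_add, smul_smul] at h7
      rw [one_div, inv_mul_cancel₀ hAne, one_smul] at h7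
      refine ⟨A⁻¹ * (⟪y - a, d⟫ * ⟪u₂, n⟫ - ⟪y - a, n⟫ * ⟪u₂, d⟫),
        A⁻¹ * (⟪u₁, d⟫ * ⟪y - a, n⟫ - ⟪u₁, n⟫ * ⟪y - a, d⟫),
        mul_nonneg (inv_nonneg.mpr hA.le) hy2.le,
        mul_nonneg (inv_nonneg.mpr hA.le) hy1.le, ?_⟩
      rw [add_assoc]
      exact sub_eq_iff_eq_add'.mp h7
    have hzU : b + r • v ∈ {y : Plane |
        0 < ⟪u₁, d⟫ * ⟪y - a, n⟫ - ⟪u₁, n⟫ * ⟪y - a, d⟫ ∧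
        0 < ⟪y - a, d⟫ * ⟪u₂, n⟫ - ⟪y - a, n⟫ * ⟪u₂, d⟫} := by
      have hza : b + r • v - a = (b - a) + r • v := by abel
      have e1 : ⟪(b - a) + r • v, d⟫ = ⟪b - a, d⟫ + r * ⟪v, d⟫ := by
        simp only [inner_add_left, real_inner_smul_left]
      have e2 : ⟪(b - a) + r • v, n⟫ = ⟪b - a, n⟫ + r * ⟪v, n⟫ := by
        simp only [inner_add_left, real_inner_smul_left]
      constructor
      · show 0 < ⟪u₁, d⟫ * ⟪b + r • v - a, n⟫ - ⟪u₁, n⟫ * ⟪b + r • v - a, d⟫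
        rw [hza, e1, e2]
        linarith only [hB₁, mul_nonneg hr.le hD1]
      · show 0 < ⟪b + r • v - a, d⟫ * ⟪u₂, n⟫ - ⟪b + r • v - a, n⟫ * ⟪u₂, d⟫
        rw [hza, e1, e2]
        linarith only [hB₂, mul_nonneg hr.le hD2]
    have hzint : b + r • v ∈ interior (wedge a u₁ u₂) :=
      mem_interior.mpr ⟨_, hUsub, hUopen, hzU⟩
    exact Set.eq_empty_iff_forall_notMem.mp hfree _ ⟨hzint, hvP⟩
  obtain ⟨s₁, t₁, hs₁, ht₁, hw₁e⟩ := hw₁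
  obtain ⟨s₂, t₂, hs₂, ht₂, hw₂e⟩ := hw₂
  have hc1 : ⟪w₁, d⟫ = s₁ * ⟪u₁, d⟫ + t₁ * ⟪u₂, d⟫ := by
    rw [hw₁e]; simp only [inner_add_left, real_inner_smul_left]
  have hc2 : ⟪w₁, n⟫ = s₁ * ⟪u₁, n⟫ + t₁ * ⟪u₂, n⟫ := by
    rw [hw₁e]; simp only [inner_add_left, real_inner_smul_left]
  have he1 : ⟪w₂, d⟫ = s₂ * ⟪u₁, d⟫ + t₂ * ⟪u₂, d⟫ := by
    rw [hw₂e]; simp only [inner_add_left, real_inner_smul_left]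
  have he2 : ⟪w₂, n⟫ = s₂ * ⟪u₁, n⟫ + t₂ * ⟪u₂, n⟫ := by
    rw [hw₂e]; simp only [inner_add_left, real_inner_smul_left]
  have hu' : ⟪u₁, d⟫ * ⟪u₂, d⟫ + ⟪u₁, n⟫ * ⟪u₂, n⟫ ≤ 0 := by rw [← par]; exact hu₁u₂
  have hortho : ⟪v₁, d⟫ * ⟪v₂, d⟫ + ⟪v₁, n⟫ * ⟪v₂, n⟫ = 0 := by rw [← par]; exact hv₁v₂
  have hqneg : -⟪v₁, n⟫ > 0 := by linarith
  set lam := ⟪v₂, d⟫ / (-⟪v₁, n⟫) with hlam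
  have hlampos : 0 < lam := div_pos hv₂d hqneg
  have hP : ⟪v₂, d⟫ = lam * (-⟪v₁, n⟫) := (div_mul_cancel₀ _ (ne_of_gt hqneg)).symm
  have hQ : ⟪v₂, n⟫ = lam * ⟪v₁, d⟫ := by
    have h2 : ⟪v₁, n⟫ * (⟪v₂, n⟫ - lam * ⟪v₁, d⟫) = 0 := by
      have h := hortho
      rw [hP] at h
      linear_combination h
    rcases mul_eq_zero.mp h2 with h3 | h3
    · exact absurd h3 (ne_of_lt hv₁n)
    · linarith [h3]
  have key := key_signs (⟪u₁, d⟫) (⟪u₁, n⟫) (⟪u₂, d⟫) (⟪u₂, n⟫) (⟪w₁, d⟫) (⟪w₁, n⟫)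
    (⟪w₂, d⟫) (⟪w₂, n⟫) (⟪v₁, d⟫) (⟪v₁, n⟫) s₁ t₁ s₂ t₂ hA hu' hs₁ ht₁ hc1 hc2 hw₁d hw₁n
    hs₂ ht₂ he1 he2 hw₂d hw₂n hv₁d hv₁n
  obtain ⟨r₁, hr₁pos, hr₁P⟩ := hr₁
  obtain ⟨r₂, hr₂pos, hr₂P⟩ := hr₂
  have hr₁P' : b + ((r₁ : ℝ)) • v₁ ∈ P := by
    rw [Nat.cast_smul_eq_nsmul]; exact hr₁P
  have hr₂P' : b + ((r₂ : ℝ)) • v₂ ∈ P := by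
    rw [Nat.cast_smul_eq_nsmul]; exact hr₂P
  have hr₁pos' : (0 : ℝ) < r₁ := by exact_mod_cast hr₁pos
  have hr₂pos' : (0 : ℝ) < r₂ := by exact_mod_cast hr₂pos
  rcases key with ⟨k1, k2⟩ | ⟨k1, k2⟩
  · exact final v₁ r₁ hr₁pos' hr₁P' (by linarith [k1]) (by linarith [k2])
  · apply final v₂ r₂ hr₂pos' hr₂P'
    · have h4 : ⟪u₁, d⟫ * ⟪v₂, n⟫ - ⟪u₁, n⟫ * ⟪v₂, d⟫
          = lam * (⟪u₁, d⟫ * ⟪v₁, d⟫ + ⟪u₁, n⟫ * ⟪v₁, n⟫) := by rw [hP, hQ]; ring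
      rw [h4]
      exact mul_nonneg hlampos.le (by linarith [k1])
    · have h4 : ⟪v₂, d⟫ * ⟪u₂, n⟫ - ⟪v₂, n⟫ * ⟪u₂, d⟫
          = lam * (-⟪v₁, n⟫ * ⟪u₂, n⟫ - ⟪v₁, d⟫ * ⟪u₂, d⟫) := by rw [hP, hQ]; ring
      rw [h4]
      exact mul_nonneg hlampos.le (by linarith [k2])

lemma wedge_comm (a x y : Plane) : wedge a x y = wedge a y x := by
  ext z
  constructor <;> rintro ⟨s, t, hs, ht, rfl⟩ <;> exact ⟨t, s, ht, hs, by abel⟩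

/-- No apex `b` of a `P`-supported quadrant whose rays cross the hull edge (of direction
`d`, with inward normal `n`) on opposite sides of the perpendicular through `b` can lie
in the interior of the `P`-free wedge of another subchain point `a`. -/
theorem apex_not_mem_free_wedge (P : Set Plane) (hP : P.Finite) (d n : Plane)
    (hd : ‖d‖ = 1) (hn : ‖n‖ = 1) (hdn : ⟪d, n⟫ = 0)
    (a u₁ u₂ : Plane) (hu₁ : ‖u₁‖ = 1) (hu₂ : ‖u₂‖ = 1) (hu₁u₂ : ⟪u₁, u₂⟫ ≤ 0)
    (hfree : interior (wedge a u₁ u₂) ∩ P = ∅)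
    (w₁ w₂ : Plane)
    (hw₁ : ∃ s₁ t₁ : ℝ, 0 ≤ s₁ ∧ 0 ≤ t₁ ∧ w₁ = s₁ • u₁ + t₁ • u₂)
    (hw₂ : ∃ s₂ t₂ : ℝ, 0 ≤ s₂ ∧ 0 ≤ t₂ ∧ w₂ = s₂ • u₁ + t₂ • u₂)
    (hw₁n : ⟪w₁, n⟫ < 0) (hw₂n : ⟪w₂, n⟫ < 0)
    (hw₁d : ⟪w₁, d⟫ < 0) (hw₂d : 0 < ⟪w₂, d⟫)
    (b v₁ v₂ : Plane) (hv₁ : ‖v₁‖ = 1) (hv₂ : ‖v₂‖ = 1) (hv₁v₂ : ⟪v₁, v₂⟫ = 0)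
    (hv₁n : ⟪v₁, n⟫ < 0) (hv₂n : ⟪v₂, n⟫ < 0)
    (hv₁d : ⟪v₁, d⟫ < 0) (hv₂d : 0 < ⟪v₂, d⟫)
    (hr₁ : ∃ r₁ > 0, b + r₁ • v₁ ∈ P) (hr₂ : ∃ r₂ > 0, b + r₂ • v₂ ∈ P) :
    b ∉ interior (wedge a u₁ u₂) := by
  intro hb
  have par := parseval d n hd hn hdn
  rcases lt_trichotomy (0 : ℝ) (⟪u₁, d⟫ * ⟪u₂, n⟫ - ⟪u₁, n⟫ * ⟪u₂, d⟫) with hA | hA | hA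
  · exact aux d n hd hn hdn par P a u₁ u₂ hu₁ hu₂ hu₁u₂ hA hfree w₁ w₂ hw₁ hw₂
      hw₁n hw₂n hw₁d hw₂d b v₁ v₂ hv₁v₂ hv₁n hv₂n hv₁d hv₂d hr₁ hr₂ hb
  · -- degenerate case: u₁, u₂ parallel, the wedge has empty interior
    have hdd : ⟪d, d⟫ = 1 := by rw [real_inner_self_eq_norm_mul_norm, hd]; norm_num
    have hnn : ⟪n, n⟫ = 1 := by rw [real_inner_self_eq_norm_mul_norm, hn]; norm_num
    have hnd : ⟪n, d⟫ = 0 := by rw [real_inner_comm]; exact hdn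
    have hU1 : ⟪u₁, d⟫ * ⟪u₁, d⟫ + ⟪u₁, n⟫ * ⟪u₁, n⟫ = 1 := by
      rw [← par u₁ u₁, real_inner_self_eq_norm_mul_norm, hu₁]; norm_num
    have memD0 : ∀ z ∈ wedge a u₁ u₂,
        ⟪u₁, d⟫ * ⟪z - a, n⟫ - ⟪u₁, n⟫ * ⟪z - a, d⟫ = 0 := by
      rintro z ⟨s, t, hs, ht, rfl⟩
      have hza : a + s • u₁ + t • u₂ - a = s • u₁ + t • u₂ := by
        rw [add_assoc, add_sub_cancel_left]
      rw [hza]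
      have h1 : ⟪s • u₁ + t • u₂, d⟫ = s * ⟪u₁, d⟫ + t * ⟪u₂, d⟫ := by
        simp only [inner_add_left, real_inner_smul_left]
      have h2 : ⟪s • u₁ + t • u₂, n⟫ = s * ⟪u₁, n⟫ + t * ⟪u₂, n⟫ := by
        simp only [inner_add_left, real_inner_smul_left]
      rw [h1, h2]
      have h3 : ⟪u₁, d⟫ * (s * ⟪u₁, n⟫ + t * ⟪u₂, n⟫) - ⟪u₁, n⟫ * (s * ⟪u₁, d⟫ + t * ⟪u₂, d⟫)
          = t * (⟪u₁, d⟫ * ⟪u₂, n⟫ - ⟪u₁, n⟫ * ⟪u₂, d⟫) := by ring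
      rw [h3, ← hA, mul_zero]
    obtain ⟨δ, hδ, hm, hp2⟩ := exists_shift (⟪u₁, d⟫ • n - ⟪u₁, n⟫ • d) hb
    have hminus := memD0 _ hm
    have hplus := memD0 _ hp2
    have hzm : b - δ • (⟪u₁, d⟫ • n - ⟪u₁, n⟫ • d) - a
        = (b - a) - δ • (⟪u₁, d⟫ • n - ⟪u₁, n⟫ • d) := by abel
    have hzp : b + δ • (⟪u₁, d⟫ • n - ⟪u₁, n⟫ • d) - a
        = (b - a) + δ • (⟪u₁, d⟫ • n - ⟪u₁, n⟫ • d) := by abel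
    rw [hzm] at hminus
    rw [hzp] at hplus
    have h1m : ⟪(b - a) - δ • (⟪u₁, d⟫ • n - ⟪u₁, n⟫ • d), d⟫
        = ⟪b - a, d⟫ + δ * ⟪u₁, n⟫ := by
      simp only [inner_sub_left, real_inner_smul_left, hdd, hnd, hnn, hdn]; ring
    have h2m : ⟪(b - a) - δ • (⟪u₁, d⟫ • n - ⟪u₁, n⟫ • d), n⟫
        = ⟪b - a, n⟫ - δ * ⟪u₁, d⟫ := by
      simp only [inner_sub_left, real_inner_smul_left, hdd, hnd, hnn, hdn]; ring
    have h1p : ⟪(b - a) + δ • (⟪u₁, d⟫ • n - ⟪u₁, n⟫ • d), d⟫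
        = ⟪b - a, d⟫ - δ * ⟪u₁, n⟫ := by
      simp only [inner_add_left, inner_sub_left, real_inner_smul_left, hdd, hnd, hnn, hdn]; ring
    have h2p : ⟪(b - a) + δ • (⟪u₁, d⟫ • n - ⟪u₁, n⟫ • d), n⟫
        = ⟪b - a, n⟫ + δ * ⟪u₁, d⟫ := by
      simp only [inner_add_left, inner_sub_left, real_inner_smul_left, hdd, hnd, hnn, hdn]; ring
    rw [h1m, h2m] at hminus
    rw [h1p, h2p] at hplus
    have hδ1 : δ * (⟪u₁, d⟫ * ⟪u₁, d⟫ + ⟪u₁, n⟫ * ⟪u₁, n⟫) = δ := by rw [hU1, mul_one]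
    linarith only [hminus, hplus, hδ, hδ1]
  · -- opposite orientation: swap u₁ and u₂
    have hswap : wedge a u₂ u₁ = wedge a u₁ u₂ := wedge_comm a u₂ u₁
    refine aux d n hd hn hdn par P a u₂ u₁ hu₂ hu₁ (by rw [real_inner_comm]; exact hu₁u₂)
      (by linarith) (by rw [hswap]; exact hfree) w₁ w₂ ?_ ?_ hw₁n hw₂n hw₁d hw₂d
      b v₁ v₂ hv₁v₂ hv₁n hv₂n hv₁d hv₂d hr₁ hr₂ (by rw [hswap]; exact hb)
    · obtain ⟨s₁, t₁, hs, ht, he⟩ := hw₁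
      exact ⟨t₁, s₁, ht, hs, by rw [he]; abel⟩
    · obtain ⟨s₂, t₂, hs, ht, he⟩ := hw₂
      exact ⟨t₂, s₂, ht, hs, by rw [he]; abel⟩
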